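/- For any kernel W : [0,1]² → ℝ with |W| ≤ 1 and any two measurable partitions P = (P₁,…,P_l) and S = (S₁,…,S_l) of [0,1] into the same number of parts, ‖W_P − W_S‖₁ ≤ 7 Σ_{i=1}^l λ(P_i △ S_i), where λ is Lebesgue measure and △ is symmetric difference. -/

import Mathlib

open MeasureTheory Set

noncomputable section

abbrev I01 : Set ℝ := Set.Icc 0 1

def IsKernel (W : ℝ → ℝ → ℝ) : Prop :=
  Measurable (Function.uncurry W) ∧ ∃ C, ∀ x y, |W x y| ≤ C

def IsPartition {ι : Type*} [Fintype ι] (P : ι → Set ℝ) : Prop :=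
  (∀ i, MeasurableSet (P i)) ∧ (∀ i, P i ⊆ I01) ∧
  (Pairwise fun i j => Disjoint (P i) (P j)) ∧ (⋃ i, P i) = I01

def cutNorm (W : ℝ → ℝ → ℝ) : ℝ :=
  sSup { r | ∃ S T : Set ℝ, MeasurableSet S ∧ MeasurableSet T ∧ S ⊆ I01 ∧ T ⊆ I01 ∧
    r = |∫ x in S, ∫ y in T, W x y| }

def cutPNorm {ι : Type*} [Fintype ι] (P : ι → Set ℝ) (W : ℝ → ℝ → ℝ) : ℝ :=
  sSup { r | ∃ S T : ι → Set ℝ,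
    (∀ i, MeasurableSet (S i) ∧ MeasurableSet (T i) ∧ S i ⊆ P i ∧ T i ⊆ P i) ∧
    r = ∑ i, ∑ j, |∫ x in S i, ∫ y in T j, W x y| }

def l1Norm (W : ℝ → ℝ → ℝ) : ℝ := ∫ x in I01, ∫ y in I01, |W x y|

def l2sq (W : ℝ → ℝ → ℝ) : ℝ := ∫ x in I01, ∫ y in I01, (W x y)^2

def avgP {ι : Type*} [Fintype ι] (P : ι → Set ℝ) (W : ℝ → ℝ → ℝ) : ℝ → ℝ → ℝ :=
  fun x y => ∑ i, ∑ j, (P i).indicator (fun _ => (1:ℝ)) x * (P j).indicator (fun _ => (1:ℝ)) y *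
    ((∫ u in P i, ∫ v in P j, W u v) / (volume (P i)).toReal / (volume (P j)).toReal)

open Function
section Helpers
lemma vol_I01 : volume I01 = 1 := by simp

lemma vol_lt_top {A : Set ℝ} (hA : A ⊆ I01) : volume A < ⊤ :=
  lt_of_le_of_lt (measure_mono hA) (by rw [vol_I01]; exact ENNReal.one_lt_top)

lemma abs_setIntegral_le {f : ℝ → ℝ} {A : Set ℝ} (hA : MeasurableSet A) (hAt : volume A < ⊤)
    {C : ℝ} (hf : ∀ x, |f x| ≤ C) : |∫ x in A, f x| ≤ C * (volume A).toReal := by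
  have := norm_setIntegral_le_of_norm_le_const_ae' (μ := volume) (f := f) hAt
    (Filter.Eventually.of_forall fun x _ => (by simpa using hf x))
  rw [measureReal_def] at this
  simpa using this

lemma integrableOn_of_bounded {f : ℝ → ℝ} (hm : Measurable f) {C : ℝ} (hf : ∀ x, |f x| ≤ C)
    {A : Set ℝ} (hAt : volume A < ⊤) : IntegrableOn f A volume :=
  Integrable.mono' (integrableOn_const hAt.ne) hm.aestronglyMeasurable
    (Filter.Eventually.of_forall fun x => by simpa using hf x)

lemma abs_div_le_one {X a : ℝ} (ha : 0 ≤ a) (h : |X| ≤ a) : |X / a| ≤ 1 := by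
  rcases eq_or_lt_of_le ha with h0 | h0
  · have : X = 0 := abs_eq_zero.mp (le_antisymm (by rwa [← h0] at h) (abs_nonneg _))
    simp [this]
  · rw [abs_div, abs_of_pos h0, div_le_one h0]; exact h

lemma abs_div_div_le_one {X a b : ℝ} (ha : 0 ≤ a) (hb : 0 ≤ b) (h : |X| ≤ a * b) :
    |X / a / b| ≤ 1 := by
  rcases eq_or_lt_of_le ha with h0 | h0
  · have : X = 0 := abs_eq_zero.mp (le_antisymm (by simpa [← h0] using h) (abs_nonneg _))
    simp [this]
  · refine abs_div_le_one hb ?_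
    rw [abs_div, abs_of_pos h0, div_le_iff₀ h0]
    linarith [h]

-- decomposition of measures
lemma toReal_decomp {A B : Set ℝ} (hA : MeasurableSet A) (hB : MeasurableSet B)
    (sA : A ⊆ I01) (sB : B ⊆ I01) :
    (volume A).toReal = (volume (A ∩ B)).toReal + (volume (A \ B)).toReal ∧
    (volume B).toReal = (volume (A ∩ B)).toReal + (volume (B \ A)).toReal ∧
    (volume (symmDiff A B)).toReal = (volume (A \ B)).toReal + (volume (B \ A)).toReal := by
  have h1 : volume (A ∩ B) + volume (A \ B) = volume A := measure_inter_add_diff A hB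
  have h2 : volume (B ∩ A) + volume (B \ A) = volume B := measure_inter_add_diff B hA
  have h3 : volume (symmDiff A B) = volume (A \ B) + volume (B \ A) := by
    rw [Set.symmDiff_def]
    exact measure_union (disjoint_sdiff_sdiff) (hB.diff hA)
  have fAB : volume (A ∩ B) ≠ ⊤ := (lt_of_le_of_lt (measure_mono inter_subset_left) (vol_lt_top sA)).ne
  have fAd : volume (A \ B) ≠ ⊤ := (lt_of_le_of_lt (measure_mono diff_subset) (vol_lt_top sA)).ne
  have fBd : volume (B \ A) ≠ ⊤ := (lt_of_le_of_lt (measure_mono diff_subset) (vol_lt_top sB)).ne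
  refine ⟨?_, ?_, ?_⟩
  · rw [← h1, ENNReal.toReal_add fAB fAd]
  · rw [← h2, ENNReal.toReal_add (by rwa [Set.inter_comm]) fBd, Set.inter_comm]
  · rw [h3, ENNReal.toReal_add fAd fBd]

lemma avg_diff_le_aux {f : ℝ → ℝ} (hm : Measurable f) (hf : ∀ x, |f x| ≤ 1)
    {A B : Set ℝ} (hA : MeasurableSet A) (hB : MeasurableSet B) (sA : A ⊆ I01) (sB : B ⊆ I01)
    (ha : 0 < (volume A).toReal) :
    |(∫ x in A, f x) / (volume A).toReal - (∫ x in B, f x) / (volume B).toReal| ≤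
      2 * (volume (symmDiff A B)).toReal / (volume A).toReal := by
  obtain ⟨e1, e2, e3⟩ := toReal_decomp hA hB sA sB
  set a := (volume A).toReal
  set b := (volume B).toReal
  set p := (volume (A ∩ B)).toReal
  set q := (volume (A \ B)).toReal
  set r := (volume (B \ A)).toReal
  set σ := (volume (symmDiff A B)).toReal
  have hq : 0 ≤ q := ENNReal.toReal_nonneg
  have hr : 0 ≤ r := ENNReal.toReal_nonneg
  have hp : 0 ≤ p := ENNReal.toReal_nonneg
  have hintA : IntegrableOn f A volume := integrableOn_of_bounded hm hf (vol_lt_top sA)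
  have hintB : IntegrableOn f B volume := integrableOn_of_bounded hm hf (vol_lt_top sB)
  have hIA : (∫ x in A ∩ B, f x) + (∫ x in A \ B, f x) = ∫ x in A, f x :=
    integral_inter_add_diff hB hintA
  have hIB : (∫ x in A ∩ B, f x) + (∫ x in B \ A, f x) = ∫ x in B, f x := by
    rw [Set.inter_comm]; exact integral_inter_add_diff hA hintB
  have hq' : |∫ x in A \ B, f x| ≤ q := by
    simpa using abs_setIntegral_le (hA.diff hB) (lt_of_le_of_lt (measure_mono diff_subset) (vol_lt_top sA)) hf
  have hr' : |∫ x in B \ A, f x| ≤ r := by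
    simpa using abs_setIntegral_le (hB.diff hA) (lt_of_le_of_lt (measure_mono diff_subset) (vol_lt_top sB)) hf
  have hIBb : |∫ x in B, f x| ≤ b := by
    simpa using abs_setIntegral_le hB (vol_lt_top sB) hf
  have hdiff : |(∫ x in A, f x) - (∫ x in B, f x)| ≤ σ := by
    rw [← hIA, ← hIB, e3]
    calc |(∫ x in A ∩ B, f x) + (∫ x in A \ B, f x) - ((∫ x in A ∩ B, f x) + (∫ x in B \ A, f x))|
        = |(∫ x in A \ B, f x) - (∫ x in B \ A, f x)| := by ring_nf
      _ ≤ q + r := by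
          calc |(∫ x in A \ B, f x) - (∫ x in B \ A, f x)| ≤ |∫ x in A \ B, f x| + |∫ x in B \ A, f x| := abs_sub _ _
            _ ≤ q + r := add_le_add hq' hr'
  rcases eq_or_lt_of_le (ENNReal.toReal_nonneg : (0:ℝ) ≤ b) with hb0 | hb0
  · -- b = 0 : then p = r = 0, a = q ≤ σ
    have hpr : p = 0 ∧ r = 0 := by constructor <;> linarith
    have hIB0 : (∫ x in B, f x) = 0 := by
      have h' : |∫ x in B, f x| ≤ 0 := hIBb.trans_eq hb0.symm
      exact abs_eq_zero.mp (le_antisymm h' (abs_nonneg _))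
    have haσ : a ≤ σ := by rw [e1, e3]; linarith [hpr.1, hpr.2]
    have hIAa : |∫ x in A, f x| ≤ a := by simpa using abs_setIntegral_le hA (vol_lt_top sA) hf
    rw [hIB0, zero_div, sub_zero, abs_div, abs_of_pos ha, div_le_div_iff₀ ha ha]
    have : |∫ x in A, f x| ≤ 2 * σ := by linarith
    calc |∫ x in A, f x| * a ≤ (2*σ) * a := by nlinarith [abs_nonneg (∫ x in A, f x)]
      _ = 2 * σ * a := by ring
  · have key : |(∫ x in A, f x) / a - (∫ x in B, f x) / b| ≤
        |(∫ x in A, f x) - (∫ x in B, f x)| / a + |∫ x in B, f x| * |b - a| / (a * b) := by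
      have expand : (∫ x in A, f x) / a - (∫ x in B, f x) / b =
          ((∫ x in A, f x) - (∫ x in B, f x)) / a + (∫ x in B, f x) * (b - a) / (a * b) := by
        have hbne : b ≠ 0 := ne_of_gt hb0
        field_simp; ring
      rw [expand]
      calc |((∫ x in A, f x) - (∫ x in B, f x)) / a + (∫ x in B, f x) * (b - a) / (a * b)|
          ≤ |((∫ x in A, f x) - (∫ x in B, f x)) / a| + |(∫ x in B, f x) * (b - a) / (a * b)| := abs_add_le _ _
        _ = |(∫ x in A, f x) - (∫ x in B, f x)| / a + |∫ x in B, f x| * |b - a| / (a * b) := by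
            rw [abs_div, abs_of_pos ha, abs_div, abs_mul, abs_of_pos (mul_pos ha hb0)]
    have hba : |b - a| ≤ σ := by
      rw [e1, e2, e3, abs_le]; constructor <;> linarith [abs_nonneg (r - q)]
    refine key.trans ?_
    have habs : |∫ x in B, f x| * |b - a| ≤ b * σ :=
      mul_le_mul hIBb hba (abs_nonneg _) (le_of_lt hb0)
    calc |(∫ x in A, f x) - (∫ x in B, f x)| / a + |∫ x in B, f x| * |b - a| / (a * b)
        ≤ σ / a + (b * σ) / (a * b) := by
          gcongr
      _ = 2 * σ / a := by
          rw [mul_comm a b, mul_div_mul_left _ _ (ne_of_gt hb0)]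
          ring

lemma avg_diff_le_max {f : ℝ → ℝ} (hm : Measurable f) (hf : ∀ x, |f x| ≤ 1)
    {A B : Set ℝ} (hA : MeasurableSet A) (hB : MeasurableSet B) (sA : A ⊆ I01) (sB : B ⊆ I01)
    (ha : 0 < (volume A).toReal) (hb : 0 < (volume B).toReal) :
    |(∫ x in A, f x) / (volume A).toReal - (∫ x in B, f x) / (volume B).toReal| ≤
      2 * (volume (symmDiff A B)).toReal / max (volume A).toReal (volume B).toReal := by
  rcases le_total (volume A).toReal (volume B).toReal with h | h
  · rw [max_eq_right h, abs_sub_comm]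
    have := avg_diff_le_aux hm hf hB hA sB sA hb
    rwa [symmDiff_comm] at this
  · rw [max_eq_left h]
    exact avg_diff_le_aux hm hf hA hB sA sB ha

-- measurability of the inner average
lemma meas_F {W : ℝ → ℝ → ℝ} (hW : Measurable (uncurry W)) (A : Set ℝ) :
    Measurable fun x => (∫ y in A, W x y) / (volume A).toReal := by
  have h : StronglyMeasurable fun x => ∫ y in A, W x y :=
    hW.stronglyMeasurable.integral_prod_right
  exact h.measurable.div_const _

lemma abs_F_le_one {W : ℝ → ℝ → ℝ} (hWb : ∀ x y, |W x y| ≤ 1) {A : Set ℝ}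
    (hA : MeasurableSet A) (sA : A ⊆ I01) (x : ℝ) :
    |(∫ y in A, W x y) / (volume A).toReal| ≤ 1 :=
  abs_div_le_one ENNReal.toReal_nonneg
    (by simpa using abs_setIntegral_le hA (vol_lt_top sA) (hWb x))

lemma abs_iint_le {W : ℝ → ℝ → ℝ} (hWb : ∀ x y, |W x y| ≤ 1)
    {A A' : Set ℝ} (hA : MeasurableSet A) (hA' : MeasurableSet A')
    (sA : A ⊆ I01) (sA' : A' ⊆ I01) :
    |(∫ x in A, ∫ y in A', W x y) / (volume A).toReal / (volume A').toReal| ≤ 1 := by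
  apply abs_div_div_le_one ENNReal.toReal_nonneg ENNReal.toReal_nonneg
  have hinner : ∀ x, |∫ y in A', W x y| ≤ (volume A').toReal := fun x => by
    simpa using abs_setIntegral_le hA' (vol_lt_top sA') (hWb x)
  calc |∫ x in A, ∫ y in A', W x y| ≤ (volume A').toReal * (volume A).toReal :=
        abs_setIntegral_le hA (vol_lt_top sA) hinner
    _ = (volume A).toReal * (volume A').toReal := mul_comm _ _

-- if volume A = 0 then vol B ≤ vol (A △ B)
lemma vol_le_symmDiff {A B : Set ℝ} (hA : volume A = 0) : volume B ≤ volume (symmDiff A B) := by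
  have : B ⊆ symmDiff A B ∪ A := by
    intro x hx
    by_cases h : x ∈ A
    · exact Or.inr h
    · exact Or.inl (Or.inr ⟨hx, h⟩)
  calc volume B ≤ volume (symmDiff A B ∪ A) := measure_mono this
    _ ≤ volume (symmDiff A B) + volume A := measure_union_le _ _
    _ = volume (symmDiff A B) := by rw [hA, add_zero]

lemma toReal_zero_vol {A : Set ℝ} (sA : A ⊆ I01) (h : (volume A).toReal = 0) : volume A = 0 := by
  rcases (ENNReal.toReal_eq_zero_iff _).mp h with h0 | h0
  · exact h0
  · exact absurd h0 (vol_lt_top sA).ne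

lemma deg_bound {A B : Set ℝ} (sA : A ⊆ I01) (sB : B ⊆ I01)
    (h : (volume A).toReal = 0) (hb : 0 < (volume B).toReal) :
    2 ≤ 2 * (volume (symmDiff A B)).toReal / max (volume A).toReal (volume B).toReal := by
  have hA0 : volume A = 0 := toReal_zero_vol sA h
  have hσ : (volume B).toReal ≤ (volume (symmDiff A B)).toReal := by
    apply ENNReal.toReal_mono (vol_lt_top (symmDiff_subset_union.trans (union_subset sA sB))).ne
    exact vol_le_symmDiff hA0
  rw [h, max_eq_right hb.le, le_div_iff₀ hb]
  linarith

lemma setIntegral_zero_of_null {f : ℝ → ℝ} {A : Set ℝ} (h : volume A = 0) :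
    (∫ x in A, f x) = 0 := by
  rw [Measure.restrict_eq_zero.mpr h]; exact integral_zero_measure _

lemma key_cell {W : ℝ → ℝ → ℝ} (hW : Measurable (uncurry W)) (hWb : ∀ x y, |W x y| ≤ 1)
    {A B A' B' : Set ℝ} (mA : MeasurableSet A) (mB : MeasurableSet B)
    (mA' : MeasurableSet A') (mB' : MeasurableSet B')
    (sA : A ⊆ I01) (sB : B ⊆ I01) (sA' : A' ⊆ I01) (sB' : B' ⊆ I01) :
    |(∫ x in A, ∫ y in A', W x y) / (volume A).toReal / (volume A').toReal -
     (∫ x in B, ∫ y in B', W x y) / (volume B).toReal / (volume B').toReal| ≤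
      2 * (volume (symmDiff A B)).toReal / max (volume A).toReal (volume B).toReal +
      2 * (volume (symmDiff A' B')).toReal / max (volume A').toReal (volume B').toReal := by
  have habs1 := abs_iint_le hWb mA mA' sA sA'
  have habs2 := abs_iint_le hWb mB mB' sB sB'
  have hRHS1 : 0 ≤ 2 * (volume (symmDiff A B)).toReal / max (volume A).toReal (volume B).toReal := by positivity
  have hRHS2 : 0 ≤ 2 * (volume (symmDiff A' B')).toReal / max (volume A').toReal (volume B').toReal := by positivity
  have two_bound : |(∫ x in A, ∫ y in A', W x y) / (volume A).toReal / (volume A').toReal -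
      (∫ x in B, ∫ y in B', W x y) / (volume B).toReal / (volume B').toReal| ≤ 2 := by
    calc _ ≤ _ := abs_sub _ _
      _ ≤ (1:ℝ) + 1 := add_le_add habs1 habs2
      _ = 2 := by norm_num
  rcases eq_or_lt_of_le (ENNReal.toReal_nonneg : (0:ℝ) ≤ (volume A).toReal) with ha | ha
  · rcases eq_or_lt_of_le (ENNReal.toReal_nonneg : (0:ℝ) ≤ (volume B).toReal) with hb | hb
    · -- both zero
      have h1 : (∫ x in A, ∫ y in A', W x y) = 0 :=
        setIntegral_zero_of_null (toReal_zero_vol sA ha.symm)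
      have h2 : (∫ x in B, ∫ y in B', W x y) = 0 :=
        setIntegral_zero_of_null (toReal_zero_vol sB hb.symm)
      rw [h1, h2]; simp [hRHS1, hRHS2]; linarith
    · linarith [deg_bound sA sB ha.symm hb]
  · rcases eq_or_lt_of_le (ENNReal.toReal_nonneg : (0:ℝ) ≤ (volume B).toReal) with hb | hb
    · have h : 2 ≤ 2 * (volume (symmDiff A B)).toReal / max (volume A).toReal (volume B).toReal := by
        have := deg_bound sB sA hb.symm ha
        rwa [symmDiff_comm, max_comm] at this
      linarith
    · -- a,b > 0; now check primes
      rcases eq_or_lt_of_le (ENNReal.toReal_nonneg : (0:ℝ) ≤ (volume A').toReal) with ha' | ha'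
      · rcases eq_or_lt_of_le (ENNReal.toReal_nonneg : (0:ℝ) ≤ (volume B').toReal) with hb' | hb'
        · have h1 : (∫ x in A, ∫ y in A', W x y) = 0 := by
            have : ∀ x, (∫ y in A', W x y) = 0 := fun x =>
              setIntegral_zero_of_null (toReal_zero_vol sA' ha'.symm)
            simp [this]
          have h2 : (∫ x in B, ∫ y in B', W x y) = 0 := by
            have : ∀ x, (∫ y in B', W x y) = 0 := fun x =>
              setIntegral_zero_of_null (toReal_zero_vol sB' hb'.symm)
            simp [this]
          rw [h1, h2]; simp; linarith
        · linarith [deg_bound sA' sB' ha'.symm hb']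
      · rcases eq_or_lt_of_le (ENNReal.toReal_nonneg : (0:ℝ) ≤ (volume B').toReal) with hb' | hb'
        · have h : 2 ≤ 2 * (volume (symmDiff A' B')).toReal / max (volume A').toReal (volume B').toReal := by
            have := deg_bound sB' sA' hb'.symm ha'
            rwa [symmDiff_comm, max_comm] at this
          linarith
        · -- main case: all positive
          set F : ℝ → ℝ := fun x => (∫ y in A', W x y) / (volume A').toReal with hF
          set G : ℝ → ℝ := fun x => (∫ y in B', W x y) / (volume B').toReal with hG
          have hFm : Measurable F := meas_F hW A'
          have hGm : Measurable G := meas_F hW B'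
          have hF1 : ∀ x, |F x| ≤ 1 := abs_F_le_one hWb mA' sA'
          have hG1 : ∀ x, |G x| ≤ 1 := abs_F_le_one hWb mB' sB'
          have hcF : (∫ x in A, ∫ y in A', W x y) / (volume A).toReal / (volume A').toReal
              = (∫ x in A, F x) / (volume A).toReal := by
            rw [hF]; rw [integral_div]; ring
          have heG : (∫ x in B, ∫ y in B', W x y) / (volume B).toReal / (volume B').toReal
              = (∫ x in B, G x) / (volume B).toReal := by
            rw [hG]; rw [integral_div]; ring
          have hmF : (∫ x in B, ∫ y in A', W x y) / (volume B).toReal / (volume A').toReal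
              = (∫ x in B, F x) / (volume B).toReal := by
            rw [hF]; rw [integral_div]; ring
          have T1 : |(∫ x in A, F x) / (volume A).toReal - (∫ x in B, F x) / (volume B).toReal| ≤
              2 * (volume (symmDiff A B)).toReal / max (volume A).toReal (volume B).toReal :=
            avg_diff_le_max hFm hF1 mA mB sA sB ha hb
          have hpt : ∀ x, |F x - G x| ≤
              2 * (volume (symmDiff A' B')).toReal / max (volume A').toReal (volume B').toReal :=
            fun x => avg_diff_le_max (hW.of_uncurry_left) (hWb x) mA' mB' sA' sB' ha' hb'
          have hintF : IntegrableOn F B volume := integrableOn_of_bounded hFm hF1 (vol_lt_top sB)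
          have hintG : IntegrableOn G B volume := integrableOn_of_bounded hGm hG1 (vol_lt_top sB)
          have T2 : |(∫ x in B, F x) / (volume B).toReal - (∫ x in B, G x) / (volume B).toReal| ≤
              2 * (volume (symmDiff A' B')).toReal / max (volume A').toReal (volume B').toReal := by
            rw [div_sub_div_same, ← integral_sub hintF hintG]
            have hb' : |∫ x in B, (F x - G x)| ≤
                (2 * (volume (symmDiff A' B')).toReal / max (volume A').toReal (volume B').toReal) *
                  (volume B).toReal :=
              abs_setIntegral_le mB (vol_lt_top sB) (fun x => hpt x)
            rw [abs_div, abs_of_pos hb, div_le_iff₀ hb]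
            exact hb'
          calc |(∫ x in A, ∫ y in A', W x y) / (volume A).toReal / (volume A').toReal -
              (∫ x in B, ∫ y in B', W x y) / (volume B).toReal / (volume B').toReal|
              = |((∫ x in A, F x) / (volume A).toReal - (∫ x in B, F x) / (volume B).toReal) +
                 ((∫ x in B, F x) / (volume B).toReal - (∫ x in B, G x) / (volume B).toReal)| := by
                rw [hcF, heG, sub_add_sub_cancel]
            _ ≤ _ + _ := abs_add_le _ _
            _ ≤ _ := add_le_add T1 T2

section
variable {ι : Type*} [Fintype ι] {P : ι → Set ℝ} {W : ℝ → ℝ → ℝ} {x y : ℝ}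

lemma avgP_eval (hdis : Pairwise fun i j => Disjoint (P i) (P j)) {i j : ι}
    (hx : x ∈ P i) (hy : y ∈ P j) :
    avgP P W x y =
      (∫ u in P i, ∫ v in P j, W u v) / (volume (P i)).toReal / (volume (P j)).toReal := by
  unfold avgP
  rw [Finset.sum_eq_single i]
  · rw [Finset.sum_eq_single j]
    · rw [indicator_of_mem hx, indicator_of_mem hy, one_mul, one_mul]
    · intro j' _ hj'
      rw [indicator_of_notMem (Set.disjoint_right.mp (hdis hj') hy)]
      ring
    · intro h; exact absurd (Finset.mem_univ j) h
  · intro i' _ hi'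
    apply Finset.sum_eq_zero
    intro j' _
    rw [indicator_of_notMem (Set.disjoint_right.mp (hdis hi') hx)]
    ring
  · intro h; exact absurd (Finset.mem_univ i) h

lemma avgP_zero_left (hx : ∀ i, x ∉ P i) : avgP P W x y = 0 := by
  unfold avgP
  apply Finset.sum_eq_zero; intro i _
  apply Finset.sum_eq_zero; intro j _
  rw [indicator_of_notMem (hx i)]; ring

lemma abs_avgP_le_one (hmeas : ∀ i, MeasurableSet (P i)) (hsub : ∀ i, P i ⊆ I01)
    (hdis : Pairwise fun i j => Disjoint (P i) (P j)) (hWb : ∀ x y, |W x y| ≤ 1) :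
    |avgP P W x y| ≤ 1 := by
  by_cases hx : ∃ i, x ∈ P i
  · obtain ⟨i, hi⟩ := hx
    by_cases hy : ∃ j, y ∈ P j
    · obtain ⟨j, hj⟩ := hy
      rw [avgP_eval hdis hi hj]
      exact abs_iint_le hWb (hmeas i) (hmeas j) (hsub i) (hsub j)
    · push_neg at hy
      unfold avgP
      have : ∀ i, (∑ j, (P i).indicator (fun _ => (1:ℝ)) x * (P j).indicator (fun _ => (1:ℝ)) y *
          ((∫ u in P i, ∫ v in P j, W u v) / (volume (P i)).toReal / (volume (P j)).toReal)) = 0 := by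
        intro i; apply Finset.sum_eq_zero; intro j _
        rw [indicator_of_notMem (hy j)]; ring
      rw [Finset.sum_congr rfl (fun i _ => this i)]; simp
  · push_neg at hx
    rw [avgP_zero_left hx]; simp

lemma measurable_avgP_uncurry (hmeas : ∀ i, MeasurableSet (P i)) :
    Measurable (uncurry (avgP P W)) := by
  unfold avgP uncurry
  apply Finset.measurable_sum
  intro i _
  apply Finset.measurable_sum
  intro j _
  exact ((((measurable_const.indicator (hmeas i)).comp measurable_fst).mul
    ((measurable_const.indicator (hmeas j)).comp measurable_snd)).mul_const _)

end

end Helpers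

theorem l1_avg_diff_le_symmDiff {l : ℕ} (W : ℝ → ℝ → ℝ)
    (hW : IsKernel W) (hWb : ∀ x y, |W x y| ≤ 1)
    (P S : Fin l → Set ℝ) (hP : IsPartition P) (hS : IsPartition S) :
    l1Norm (fun x y => avgP P W x y - avgP S W x y) ≤
      7 * ∑ i, (volume (symmDiff (P i) (S i))).toReal := by
  obtain ⟨hPm, hPsub, hPdis, hPun⟩ := hP
  obtain ⟨hSm, hSsub, hSdis, hSun⟩ := hS
  have hWm : Measurable (uncurry W) := hW.1
  set σ : Fin l → ℝ := fun i => (volume (symmDiff (P i) (S i))).toReal with hσ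
  set d : ℝ := ∑ i, σ i with hd
  have hσ0 : ∀ i, 0 ≤ σ i := fun i => ENNReal.toReal_nonneg
  have hd0 : 0 ≤ d := Finset.sum_nonneg fun i _ => hσ0 i
  set cst : Fin l → ℝ := fun i =>
    2 * σ i / max (volume (P i)).toReal (volume (S i)).toReal with hcst
  have hcst0 : ∀ i, 0 ≤ cst i := fun i => by
    simp only [hcst]; positivity
  set bad : Set ℝ := I01 \ ⋃ i, (P i ∩ S i) with hbad
  have mbad : MeasurableSet bad :=
    measurableSet_Icc.diff (MeasurableSet.iUnion fun i => (hPm i).inter (hSm i))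
  have hbadsub : bad ⊆ I01 := diff_subset
  set g : ℝ → ℝ := fun x => ∑ i, (P i ∩ S i).indicator (fun _ => cst i) x with hg
  have hg0 : ∀ x, 0 ≤ g x := fun x =>
    Finset.sum_nonneg fun i _ => Set.indicator_nonneg (fun _ _ => hcst0 i) x
  have hgm : Measurable g :=
    Finset.measurable_sum _ fun i _ => measurable_const.indicator ((hPm i).inter (hSm i))
  have hgb : ∀ x, |g x| ≤ ∑ i, cst i := fun x => by
    rw [abs_of_nonneg (hg0 x)]
    apply Finset.sum_le_sum
    intro i _
    by_cases hmem : x ∈ P i ∩ S i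
    · rw [Set.indicator_of_mem hmem]
    · rw [Set.indicator_of_notMem hmem]; exact hcst0 i
  set D : ℝ → ℝ → ℝ := fun x y => avgP P W x y - avgP S W x y with hD
  have hDm : Measurable (uncurry D) :=
    (measurable_avgP_uncurry hPm).sub (measurable_avgP_uncurry hSm)
  have hD2 : ∀ x y, |D x y| ≤ 2 := fun x y => by
    calc |D x y| ≤ |avgP P W x y| + |avgP S W x y| := abs_sub _ _
      _ ≤ 1 + 1 := add_le_add (abs_avgP_le_one hPm hPsub hPdis hWb)
          (abs_avgP_le_one hSm hSsub hSdis hWb)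
      _ = 2 := by norm_num
  have hindb : ∀ x : ℝ, 0 ≤ bad.indicator (fun _ => (1:ℝ)) x :=
    fun x => Set.indicator_nonneg (fun _ _ => zero_le_one) x
  have hind1 : ∀ x : ℝ, |bad.indicator (fun _ => (1:ℝ)) x| ≤ 1 := fun x => by
    by_cases h : x ∈ bad <;> simp [h]
  -- pointwise bound
  have hpt : ∀ x ∈ I01, ∀ y ∈ I01, |D x y| ≤
      (2 * bad.indicator (fun _ => (1:ℝ)) x + g x) +
      (2 * bad.indicator (fun _ => (1:ℝ)) y + g y) := by
    intro x hx y hy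
    by_cases hxg : ∃ i, x ∈ P i ∩ S i
    · by_cases hyg : ∃ j, y ∈ P j ∩ S j
      · obtain ⟨i, hxi⟩ := hxg
        obtain ⟨j, hyj⟩ := hyg
        have hDval : D x y =
            (∫ u in P i, ∫ v in P j, W u v) / (volume (P i)).toReal / (volume (P j)).toReal -
            (∫ u in S i, ∫ v in S j, W u v) / (volume (S i)).toReal / (volume (S j)).toReal := by
          simp only [hD]
          rw [avgP_eval hPdis hxi.1 hyj.1, avgP_eval hSdis hxi.2 hyj.2]
        have hkey := key_cell hWm hWb (hPm i) (hSm i) (hPm j) (hSm j)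
          (hPsub i) (hSsub i) (hPsub j) (hSsub j)
        have hgx : g x = cst i := by
          simp only [hg]; rw [Finset.sum_eq_single i]
          · exact Set.indicator_of_mem hxi _
          · intro i' _ hi'
            exact Set.indicator_of_notMem
              (fun hmem => Set.disjoint_right.mp (hPdis hi') hxi.1 hmem.1) _
          · intro h; exact absurd (Finset.mem_univ i) h
        have hgy : g y = cst j := by
          simp only [hg]; rw [Finset.sum_eq_single j]
          · exact Set.indicator_of_mem hyj _
          · intro j' _ hj'
            exact Set.indicator_of_notMem
              (fun hmem => Set.disjoint_right.mp (hPdis hj') hyj.1 hmem.1) _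
          · intro h; exact absurd (Finset.mem_univ j) h
        have hbx : bad.indicator (fun _ => (1:ℝ)) x = 0 :=
          Set.indicator_of_notMem (fun hcon => hcon.2 (mem_iUnion.mpr ⟨i, hxi⟩)) _
        have hby : bad.indicator (fun _ => (1:ℝ)) y = 0 :=
          Set.indicator_of_notMem (fun hcon => hcon.2 (mem_iUnion.mpr ⟨j, hyj⟩)) _
        rw [hbx, hby, hgx, hgy, hDval]
        simpa [hcst, hσ] using hkey
      · push_neg at hyg
        have hyb : y ∈ bad := by
          rw [hbad, Set.mem_diff]
          exact ⟨hy, fun hcon => by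
            obtain ⟨j, hj⟩ := mem_iUnion.mp hcon
            exact hyg j hj⟩
        have hby : bad.indicator (fun _ => (1:ℝ)) y = 1 := Set.indicator_of_mem hyb _
        rw [hby]
        have := hD2 x y
        linarith [hg0 x, hg0 y, hindb x]
    · push_neg at hxg
      have hxb : x ∈ bad := by
        rw [hbad, Set.mem_diff]
        exact ⟨hx, fun hcon => by
          obtain ⟨i, hi⟩ := mem_iUnion.mp hcon
          exact hxg i hi⟩
      have hbx : bad.indicator (fun _ => (1:ℝ)) x = 1 := Set.indicator_of_mem hxb _
      rw [hbx]
      have := hD2 x y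
      linarith [hg0 x, hg0 y, hindb y]
  -- integrability and integral computations
  have hiI : volume I01 < ⊤ := by rw [vol_I01]; exact ENNReal.one_lt_top
  have hIbad : IntegrableOn (fun y => bad.indicator (fun _ => (1:ℝ)) y) I01 volume :=
    integrableOn_of_bounded (measurable_const.indicator mbad) hind1 hiI
  have hIg : IntegrableOn g I01 volume := integrableOn_of_bounded hgm hgb hiI
  set β : ℝ := (volume bad).toReal with hβ
  set γ : ℝ := ∑ i, (volume (P i ∩ S i)).toReal * cst i with hγ
  have Ibad : (∫ y in I01, bad.indicator (fun _ => (1:ℝ)) y) = β := by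
    rw [setIntegral_indicator mbad, Set.inter_eq_self_of_subset_right hbadsub,
      setIntegral_const]
    simp [hβ, measureReal_def]
  have Ig : (∫ y in I01, g y) = γ := by
    simp only [hg]; rw [integral_finset_sum _ (fun i _ => integrableOn_of_bounded
      (measurable_const.indicator ((hPm i).inter (hSm i))) (C := |cst i|)
      (fun x => by by_cases h : x ∈ P i ∩ S i <;> simp [h]) hiI)]
    rw [hγ]
    apply Finset.sum_congr rfl
    intro i _
    rw [setIntegral_indicator ((hPm i).inter (hSm i)),
      Set.inter_eq_self_of_subset_right (inter_subset_left.trans (hPsub i)),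
      setIntegral_const, smul_eq_mul, measureReal_def]
  -- measure identities
  have hbadP : bad = ⋃ i, (P i \ S i) := by
    rw [hbad]; ext x
    simp only [mem_diff, mem_iUnion, mem_inter_iff, not_exists, not_and]
    constructor
    · rintro ⟨hxI, hni⟩
      obtain ⟨i, hi⟩ := mem_iUnion.mp (hPun ▸ hxI : x ∈ ⋃ i, P i)
      exact ⟨i, hi, hni i hi⟩
    · rintro ⟨i, hpi, hsi⟩
      refine ⟨hPsub i hpi, fun j hpj hsj => ?_⟩
      by_cases hij : j = i
      · exact hsi (hij ▸ hsj)
      · exact Set.disjoint_left.mp (hPdis hij) hpj hpi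
  have hbadS : bad = ⋃ i, (S i \ P i) := by
    rw [hbad]; ext x
    simp only [mem_diff, mem_iUnion, mem_inter_iff, not_exists, not_and]
    constructor
    · rintro ⟨hxI, hni⟩
      obtain ⟨i, hi⟩ := mem_iUnion.mp (hSun ▸ hxI : x ∈ ⋃ i, S i)
      exact ⟨i, hi, fun hpi => hni i hpi hi⟩
    · rintro ⟨i, hsi, hpi⟩
      refine ⟨hSsub i hsi, fun j hpj hsj => ?_⟩
      by_cases hij : j = i
      · exact hpi (hij ▸ hpj)
      · exact Set.disjoint_left.mp (hSdis hij) hsj hsi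
  have hβP : β = ∑ i, (volume (P i \ S i)).toReal := by
    rw [hβ, hbadP, measure_iUnion
      (fun i j hij => (hPdis hij).mono diff_subset diff_subset)
      (fun i => (hPm i).diff (hSm i)), tsum_fintype,
      ENNReal.toReal_sum (fun i _ => (vol_lt_top (diff_subset.trans (hPsub i))).ne)]
  have hβS : β = ∑ i, (volume (S i \ P i)).toReal := by
    rw [hβ, hbadS, measure_iUnion
      (fun i j hij => (hSdis hij).mono diff_subset diff_subset)
      (fun i => (hSm i).diff (hPm i)), tsum_fintype,
      ENNReal.toReal_sum (fun i _ => (vol_lt_top (diff_subset.trans (hSsub i))).ne)]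
  have hβd : 2 * β ≤ d := by
    have hsum : β + β = d := by
      calc β + β = ∑ i, ((volume (P i \ S i)).toReal + (volume (S i \ P i)).toReal) := by
            rw [Finset.sum_add_distrib, ← hβP, ← hβS]
        _ = ∑ i, σ i := Finset.sum_congr rfl (fun i _ =>
            ((toReal_decomp (hPm i) (hSm i) (hPsub i) (hSsub i)).2.2).symm)
        _ = d := hd.symm
    linarith
  have hγd : γ ≤ 2 * d := by
    rw [hγ, hd, Finset.mul_sum]
    apply Finset.sum_le_sum
    intro i _
    have hMi0 : (0:ℝ) ≤ max (volume (P i)).toReal (volume (S i)).toReal :=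
      le_max_of_le_left ENNReal.toReal_nonneg
    rcases eq_or_lt_of_le hMi0 with h0 | h0
    · have : cst i = 0 := by simp only [hcst, ← h0, div_zero]
      rw [this, mul_zero]
      positivity
    · have hle : (volume (P i ∩ S i)).toReal ≤ max (volume (P i)).toReal (volume (S i)).toReal :=
        le_trans (ENNReal.toReal_mono (vol_lt_top (hPsub i)).ne
          (measure_mono inter_subset_left)) (le_max_left _ _)
      calc (volume (P i ∩ S i)).toReal * cst i
          ≤ (max (volume (P i)).toReal (volume (S i)).toReal) * cst i :=
            mul_le_mul_of_nonneg_right hle (hcst0 i)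
        _ = 2 * σ i := by simp only [hcst]; field_simp
  -- inner integral bound
  set Iin : ℝ → ℝ := fun x => ∫ y in I01, |D x y| with hIin
  have hInner : ∀ x ∈ I01, Iin x ≤
      (2 * bad.indicator (fun _ => (1:ℝ)) x + g x) + (2 * β + γ) := by
    intro x hx
    have int1 : IntegrableOn (fun y => |D x y|) I01 volume :=
      integrableOn_of_bounded (hDm.of_uncurry_left.abs) (C := 2)
        (fun y => by rw [abs_abs]; exact hD2 x y) hiI
    have intc : IntegrableOn (fun _ : ℝ => 2 * bad.indicator (fun _ => (1:ℝ)) x + g x) I01 volume :=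
      integrableOn_const hiI.ne
    have intr : IntegrableOn (fun y => 2 * bad.indicator (fun _ => (1:ℝ)) y + g y) I01 volume :=
      (hIbad.const_mul 2).add hIg
    calc Iin x ≤ ∫ y in I01, ((2 * bad.indicator (fun _ => (1:ℝ)) x + g x) +
          (2 * bad.indicator (fun _ => (1:ℝ)) y + g y)) :=
          setIntegral_mono_on int1 (intc.add intr) measurableSet_Icc (hpt x hx)
      _ = (2 * bad.indicator (fun _ => (1:ℝ)) x + g x) + (2 * β + γ) := by
          rw [integral_add intc intr, integral_add (hIbad.const_mul 2) hIg,
            integral_const_mul, Ibad, Ig, setIntegral_const, measureReal_def, vol_I01]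
          simp
  -- outer integral
  have hIinm : Measurable Iin := by
    have hsm : StronglyMeasurable (fun p : ℝ × ℝ => |D p.1 p.2|) :=
      (hDm.abs).stronglyMeasurable
    exact (hsm.integral_prod_right' (ν := volume.restrict I01)).measurable
  have hIinb : ∀ x, |Iin x| ≤ 2 := fun x => by
    have h := abs_setIntegral_le measurableSet_Icc hiI (C := 2)
      (fun y => by rw [abs_abs]; exact hD2 x y)
    calc |Iin x| ≤ 2 * (volume I01).toReal := h
      _ = 2 := by rw [vol_I01]; simp
  have hIinInt : IntegrableOn Iin I01 volume := integrableOn_of_bounded hIinm hIinb hiI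
  have int3 : IntegrableOn (fun x => (2 * bad.indicator (fun _ => (1:ℝ)) x + g x) +
      (2 * β + γ)) I01 volume :=
    ((hIbad.const_mul 2).add hIg).add (integrableOn_const hiI.ne)
  have houter : (∫ x in I01, Iin x) ≤ 4 * β + 2 * γ := by
    calc (∫ x in I01, Iin x)
        ≤ ∫ x in I01, ((2 * bad.indicator (fun _ => (1:ℝ)) x + g x) + (2 * β + γ)) :=
          setIntegral_mono_on hIinInt int3 measurableSet_Icc hInner
      _ = (2 * β + γ) + (2 * β + γ) := by
          have intL : IntegrableOn (fun x => 2 * bad.indicator (fun _ => (1:ℝ)) x + g x) I01 volume :=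
            (hIbad.const_mul 2).add hIg
          rw [integral_add intL (integrableOn_const hiI.ne),
            integral_add (hIbad.const_mul 2) hIg,
            integral_const_mul, Ibad, Ig, setIntegral_const, measureReal_def, vol_I01]
          simp
      _ = 4 * β + 2 * γ := by ring
  have hfinal : l1Norm D ≤ 7 * d := by
    have hstart : l1Norm D = ∫ x in I01, Iin x := rfl
    rw [hstart]
    calc (∫ x in I01, Iin x) ≤ 4 * β + 2 * γ := houter
      _ ≤ 7 * d := by linarith [hβd, hγd, hd0]
  exact hfinal
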